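/- Let q₀,...,qₙ be positive integers with gcd(q₀,...,qₙ) = 1. In the quotient ring R = ℚ[x₀,...,xₙ]/(x₀⋯xₙ, q₁x₀ − q₀x₁, ..., qₙx₀ − q₀xₙ), one has R ≅ ℚ[t]/(t^{n+1}), via the map sending each xᵢ to (qᵢ/q₀)·t. -/

import Mathlib

open MvPolynomial in
/-- The defining ideal of the rational Chow ring of `ℙ(q₀,...,qₙ)`: the Stanley–Reisner
ideal `⟨x₀⋯xₙ⟩` plus the linear ideal `⟨qᵢx₀ - q₀xᵢ⟩`. -/
noncomputable def chowIdeal (n : ℕ) (q : Fin (n + 1) → ℕ) : Ideal (MvPolynomial (Fin (n + 1)) ℚ) :=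
  Ideal.span ({∏ i, X i} ∪
    Set.range fun i : Fin n => C (q i.succ : ℚ) * X 0 - C (q 0 : ℚ) * X i.succ)

open MvPolynomial Ideal.Quotient in
/-- In the quotient, `xᵢ = (qᵢ/q₀)·x₀`. -/
lemma chow_X_eq (n : ℕ) (q : Fin (n + 1) → ℕ) (hq : ∀ i, 0 < q i) (i : Fin (n + 1)) :
    mk (chowIdeal n q) (C ((q i : ℚ) / (q 0 : ℚ)) * X 0) = mk (chowIdeal n q) (X i) := by
  have hq0 : (q 0 : ℚ) ≠ 0 := Nat.cast_ne_zero.mpr (hq 0).ne'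
  induction i using Fin.cases with
  | zero => rw [div_self hq0, C_1, one_mul]
  | succ j =>
    have hmem : (C (q j.succ : ℚ) * X 0 - C (q 0 : ℚ) * X j.succ : MvPolynomial (Fin (n+1)) ℚ)
        ∈ chowIdeal n q :=
      Ideal.subset_span (Set.mem_union_right _ ⟨j, rfl⟩)
    have h0 : mk (chowIdeal n q) (C (q j.succ : ℚ) * X 0) =
        mk (chowIdeal n q) (C (q 0 : ℚ) * X j.succ) := by
      rw [← sub_eq_zero, ← map_sub]
      exact (Ideal.Quotient.eq_zero_iff_mem).mpr hmem
    have h2 := congrArg (fun z => mk (chowIdeal n q) (C ((q 0 : ℚ)⁻¹)) * z) h0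
    simp only [← map_mul] at h2
    have e1 : C ((q 0:ℚ)⁻¹) * (C (q j.succ:ℚ) * X 0)
        = C ((q j.succ:ℚ)/(q 0:ℚ)) * (X 0 : MvPolynomial (Fin (n+1)) ℚ) := by
      rw [← mul_assoc, ← C_mul, inv_mul_eq_div]
    have e2 : C ((q 0:ℚ)⁻¹) * (C (q 0:ℚ) * X j.succ)
        = (X j.succ : MvPolynomial (Fin (n+1)) ℚ) := by
      rw [← mul_assoc, ← C_mul, inv_mul_cancel₀ hq0, C_1, one_mul]
    rw [e1, e2] at h2
    exact h2

open MvPolynomial Ideal.Quotient in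
lemma chow_x0_pow (n : ℕ) (q : Fin (n + 1) → ℕ) (hq : ∀ i, 0 < q i) :
    (X 0 : MvPolynomial (Fin (n + 1)) ℚ) ^ (n + 1) ∈ chowIdeal n q := by
  have hq0 : ∀ i, (q i : ℚ) ≠ 0 := fun i => Nat.cast_ne_zero.mpr (hq i).ne'
  set c : ℚ := ∏ i, (q i : ℚ) / (q 0 : ℚ) with hc
  have hcne : c ≠ 0 := Finset.prod_ne_zero_iff.mpr fun i _ => div_ne_zero (hq0 i) (hq0 0)
  have h0 : mk (chowIdeal n q) (∏ i, X i) = 0 :=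
    eq_zero_iff_mem.mpr (Ideal.subset_span (Set.mem_union_left _ rfl))
  have h1 : (0 : _ ⧸ chowIdeal n q) = mk (chowIdeal n q) (C c) * (mk (chowIdeal n q) (X 0))^(n+1) := by
    rw [← h0, map_prod]
    calc ∏ i, mk (chowIdeal n q) (X i)
        = ∏ i : Fin (n+1), (mk (chowIdeal n q) (C ((q i:ℚ)/(q 0:ℚ))) * mk (chowIdeal n q) (X 0)) := by
          refine Finset.prod_congr rfl fun i _ => ?_
          rw [← map_mul, chow_X_eq n q hq i]
      _ = (∏ i : Fin (n+1), mk (chowIdeal n q) (C ((q i:ℚ)/(q 0:ℚ)))) * (mk (chowIdeal n q) (X 0))^(n+1) := by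
          rw [Finset.prod_mul_distrib, Finset.prod_const, Finset.card_univ, Fintype.card_fin]
      _ = mk (chowIdeal n q) (C c) * (mk (chowIdeal n q) (X 0))^(n+1) := by
          rw [← map_prod, ← map_prod]
  have h2 := congrArg (fun z => mk (chowIdeal n q) (C c⁻¹) * z) h1
  simp only [mul_zero] at h2
  rw [← mul_assoc, ← map_mul, ← C_mul, inv_mul_cancel₀ hcne, C_1, map_one, one_mul] at h2
  rw [← Ideal.Quotient.eq_zero_iff_mem, map_pow]
  exact h2.symm
open MvPolynomial in
/-- The rational Chow ring of `ℙ(q₀,...,qₙ)` is isomorphic to `ℚ[t]/(t^{n+1})`, via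
`xᵢ ↦ (qᵢ/q₀)·t`. -/
theorem chow_ring_iso (n : ℕ) (q : Fin (n + 1) → ℕ) (hq : ∀ i, 0 < q i)
    (hgcd : Finset.univ.gcd q = 1) :
    ∃ f : (MvPolynomial (Fin (n + 1)) ℚ ⧸ chowIdeal n q) ≃+*
        (Polynomial ℚ ⧸ Ideal.span {(Polynomial.X : Polynomial ℚ) ^ (n + 1)}),
      ∀ i : Fin (n + 1),
        f (Ideal.Quotient.mk (chowIdeal n q) (X i)) =
          Ideal.Quotient.mk _ (Polynomial.C ((q i : ℚ) / (q 0 : ℚ)) * Polynomial.X) := by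
  have hq0 : (q 0 : ℚ) ≠ 0 := Nat.cast_ne_zero.mpr (hq 0).ne'
  set J : Ideal (Polynomial ℚ) := Ideal.span {(Polynomial.X : Polynomial ℚ) ^ (n + 1)} with hJ
  set I := chowIdeal n q with hI
  -- the forward algebra map
  let φ : MvPolynomial (Fin (n + 1)) ℚ →ₐ[ℚ] Polynomial ℚ :=
    aeval fun i => Polynomial.C ((q i : ℚ) / (q 0 : ℚ)) * Polynomial.X
  let ψ : Polynomial ℚ →ₐ[ℚ] MvPolynomial (Fin (n + 1)) ℚ := Polynomial.aeval (X 0)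
  have hφ : ∀ a ∈ I, ((Ideal.Quotient.mkₐ ℚ J).comp φ) a = 0 := by
    intro a ha
    have hker : I ≤ RingHom.ker ((Ideal.Quotient.mkₐ ℚ J).comp φ) := by
      rw [hI, chowIdeal, Ideal.span_le]
      rintro x (rfl | ⟨i, rfl⟩)
      · -- the monomial generator
        rw [SetLike.mem_coe, RingHom.mem_ker]
        have hval : φ (∏ i, X i) =
            Polynomial.C (∏ i, (q i : ℚ) / (q 0 : ℚ)) * Polynomial.X ^ (n + 1) := by
          rw [map_prod]
          simp only [φ, aeval_X]
          rw [Finset.prod_mul_distrib, Finset.prod_const, Finset.card_univ, Fintype.card_fin,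
            ← map_prod]
        show Ideal.Quotient.mk J (φ (∏ i, X i)) = 0
        rw [hval, Ideal.Quotient.eq_zero_iff_mem]
        exact Ideal.mul_mem_left _ _ (Ideal.subset_span rfl)
      · rw [SetLike.mem_coe, RingHom.mem_ker]
        show Ideal.Quotient.mk J (φ (C (q i.succ : ℚ) * X 0 - C (q 0 : ℚ) * X i.succ)) = 0
        have hval : φ (C (q i.succ : ℚ) * X 0 - C (q 0 : ℚ) * X i.succ) = 0 := by
          simp only [φ, map_sub, map_mul, aeval_X, aeval_C, Polynomial.algebraMap_eq]
          rw [sub_eq_zero, ← mul_assoc, ← mul_assoc, ← map_mul, ← map_mul]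
          congr 1
          field_simp
        rw [hval, map_zero]
    exact hker ha
  have hψ : ∀ a ∈ J, ((Ideal.Quotient.mkₐ ℚ I).comp ψ) a = 0 := by
    intro a ha
    have hker : J ≤ RingHom.ker ((Ideal.Quotient.mkₐ ℚ I).comp ψ) := by
      rw [hJ, Ideal.span_le]
      rintro x rfl
      rw [SetLike.mem_coe, RingHom.mem_ker]
      show Ideal.Quotient.mk I (ψ (Polynomial.X ^ (n + 1))) = 0
      have : ψ (Polynomial.X ^ (n + 1)) = (X 0 : MvPolynomial (Fin (n + 1)) ℚ) ^ (n + 1) := by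
        simp [ψ]
      rw [this, Ideal.Quotient.eq_zero_iff_mem]
      exact chow_x0_pow n q hq
    exact hker ha
  let F : (MvPolynomial (Fin (n + 1)) ℚ ⧸ I) →ₐ[ℚ] (Polynomial ℚ ⧸ J) :=
    Ideal.Quotient.liftₐ I ((Ideal.Quotient.mkₐ ℚ J).comp φ) hφ
  let G : (Polynomial ℚ ⧸ J) →ₐ[ℚ] (MvPolynomial (Fin (n + 1)) ℚ ⧸ I) :=
    Ideal.Quotient.liftₐ J ((Ideal.Quotient.mkₐ ℚ I).comp ψ) hψ
  have hF : ∀ p, F (Ideal.Quotient.mk I p) = Ideal.Quotient.mk J (φ p) := fun p => by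
    simp [F, Ideal.Quotient.liftₐ_apply, Ideal.Quotient.lift_mk]
    rfl
  have hG : ∀ p, G (Ideal.Quotient.mk J p) = Ideal.Quotient.mk I (ψ p) := fun p => by
    simp [G, Ideal.Quotient.liftₐ_apply, Ideal.Quotient.lift_mk]
    rfl
  have hFG : F.comp G = AlgHom.id ℚ _ := by
    apply Ideal.Quotient.algHom_ext
    apply Polynomial.algHom_ext
    show F (G (Ideal.Quotient.mk J Polynomial.X)) = Ideal.Quotient.mk J Polynomial.X
    rw [hG, show ψ Polynomial.X = X 0 from Polynomial.aeval_X _, hF,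
      show φ (X 0) = Polynomial.C ((q 0 : ℚ) / (q 0 : ℚ)) * Polynomial.X from by simp [φ],
      div_self hq0, Polynomial.C_1, one_mul]
  have hGF : G.comp F = AlgHom.id ℚ _ := by
    apply Ideal.Quotient.algHom_ext
    apply MvPolynomial.algHom_ext
    intro i
    show G (F (Ideal.Quotient.mk I (X i))) = Ideal.Quotient.mk I (X i)
    rw [hF, show φ (X i) = Polynomial.C ((q i : ℚ) / (q 0 : ℚ)) * Polynomial.X from by simp [φ],
      hG, map_mul, show ψ Polynomial.X = X 0 from Polynomial.aeval_X _,
      show ψ (Polynomial.C ((q i : ℚ) / (q 0 : ℚ))) = C ((q i : ℚ) / (q 0 : ℚ)) from by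
        simp [ψ]]
    exact chow_X_eq n q hq i
  refine ⟨(AlgEquiv.ofAlgHom F G hFG hGF).toRingEquiv, fun i => ?_⟩
  show F (Ideal.Quotient.mk I (X i)) = _
  rw [hF, show φ (X i) = Polynomial.C ((q i : ℚ) / (q 0 : ℚ)) * Polynomial.X from by simp [φ]]
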